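/- Every fractional pebbling of the complete binary tree of height 3 requires at least 2.5 pebbles. -/

import Mathlib

/-! ## Fractional black-white pebbling -/

/-- A fractional pebble configuration: black and white pebble values on each node. -/
structure FConfig (V : Type) where
  b : V → ℝ
  w : V → ℝ

namespace FConfig

/-- Validity: all values nonnegative, total value of each node at most 1. -/
def Valid {V : Type} (C : FConfig V) : Prop :=
  ∀ v, 0 ≤ C.b v ∧ 0 ≤ C.w v ∧ C.b v + C.w v ≤ 1

/-- Total pebble weight of a configuration. -/
noncomputable def weight {V : Type} [Fintype V] (C : FConfig V) : ℝ :=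
  ∑ v, (C.b v + C.w v)

/-- The empty configuration. -/
def zero (V : Type) : FConfig V := ⟨fun _ => 0, fun _ => 0⟩

/-- A whole (non-fractional) configuration: all values 0 or 1. -/
def Whole {V : Type} (C : FConfig V) : Prop :=
  ∀ v, (C.b v = 0 ∨ C.b v = 1) ∧ (C.w v = 0 ∨ C.w v = 1)

/-- A black configuration: whole, and with no white pebbles. -/
def BlackOnly {V : Type} (C : FConfig V) : Prop :=
  C.Whole ∧ ∀ v, C.w v = 0

end FConfig

/-- One legal move of the fractional black-white pebble game (no white sliding):
(i) decrease a black value; (ii) increase a white value; (iii) if every child of `v`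
has total pebble value 1, decrease `w v` to 0 and/or increase `b v` arbitrarily while
simultaneously decreasing the black values of the children of `v` arbitrarily.
Here `child c v` means `c` is a child of `v`. -/
def FMove {V : Type} (child : V → V → Prop) (C C' : FConfig V) : Prop :=
  (∃ v, C'.b v ≤ C.b v ∧ C'.w v = C.w v ∧
     ∀ u, u ≠ v → C'.b u = C.b u ∧ C'.w u = C.w u) ∨
  (∃ v, C'.b v = C.b v ∧ C.w v ≤ C'.w v ∧
     ∀ u, u ≠ v → C'.b u = C.b u ∧ C'.w u = C.w u) ∨
  (∃ v, (∀ c, child c v → C.b c + C.w c = 1) ∧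
     C.b v ≤ C'.b v ∧ (C'.w v = 0 ∨ C'.w v = C.w v) ∧
     (∀ c, child c v → C'.b c ≤ C.b c ∧ C'.w c = C.w c) ∧
     (∀ u, u ≠ v → ¬ child u v → C'.b u = C.b u ∧ C'.w u = C.w u))

/-- The additional white sliding move: if `w v = 1`, `j` is a child of `v`, and every
child of `v` other than `j` has total pebble value 1, then set `w v = 0` and increase
`w j` so that `j` gets total pebble value 1. -/
def WhiteSlide {V : Type} (child : V → V → Prop) (C C' : FConfig V) : Prop :=
  ∃ v j, child j v ∧ j ≠ v ∧ C.w v = 1 ∧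
    (∀ c, child c v → c ≠ j → C.b c + C.w c = 1) ∧
    C'.w v = 0 ∧ C'.b v = C.b v ∧
    C'.b j = C.b j ∧ C.w j ≤ C'.w j ∧ C'.b j + C'.w j = 1 ∧
    (∀ u, u ≠ v → u ≠ j → C'.b u = C.b u ∧ C'.w u = C.w u)

/-- A pebbling of cost at most `p`, with moves given by `move`, all configurations
satisfying the extra constraint `Extra`, starting and ending with the empty
configuration and achieving `Goal` (a property of the whole sequence together with
its length). -/
def PebblingLE {V : Type} [Fintype V] (move : FConfig V → FConfig V → Prop)
    (Extra : FConfig V → Prop) (Goal : (ℕ → FConfig V) → ℕ → Prop) (p : ℝ) : Prop :=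
  ∃ (n : ℕ) (C : ℕ → FConfig V),
    C 0 = FConfig.zero V ∧ C n = FConfig.zero V ∧
    (∀ t ≤ n, (C t).Valid) ∧
    (∀ t ≤ n, Extra (C t)) ∧
    (∀ t < n, move (C t) (C (t + 1))) ∧
    Goal C n ∧
    (∀ t ≤ n, (C t).weight ≤ p)

/-! ## The complete `d`-ary tree of height `h` (with `h` levels) -/

/-- Nodes of the complete `d`-ary tree with `h` levels: a level `l < h`
together with an index among the `d ^ l` nodes of that level. -/
abbrev TNode (d h : ℕ) := Σ l : Fin h, Fin (d ^ (l : ℕ))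

/-- `c` is a child of `v` in the complete `d`-ary tree. -/
def IsChild (d h : ℕ) (c v : TNode d h) : Prop :=
  (c.1 : ℕ) = (v.1 : ℕ) + 1 ∧ ∃ j : Fin d, (c.2 : ℕ) = d * (v.2 : ℕ) + (j : ℕ)

/-- The root of the tree. -/
def troot (d h : ℕ) (hh : 0 < h) : TNode d h :=
  ⟨⟨0, hh⟩, ⟨0, by simp⟩⟩

/-- The tree `T_d^h` has a black pebbling of cost at most `p`. -/
def BlackPebbles (d h : ℕ) (hh : 0 < h) (p : ℝ) : Prop :=
  PebblingLE (FMove (IsChild d h)) FConfig.BlackOnly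
    (fun C n => ∃ t ≤ n, (C t).b (troot d h hh) = 1) p

/-- The tree `T_d^h` has a whole black-white pebbling (no white sliding)
of cost at most `p`. -/
def BWPebbles (d h : ℕ) (hh : 0 < h) (p : ℝ) : Prop :=
  PebblingLE (FMove (IsChild d h)) FConfig.Whole
    (fun C n => ∃ t ≤ n, (C t).b (troot d h hh) = 1) p

/-- The tree `T_d^h` has a fractional pebbling of cost at most `p`. -/
def FRPebbles (d h : ℕ) (hh : 0 < h) (p : ℝ) : Prop :=
  PebblingLE (FMove (IsChild d h)) (fun _ => True)
    (fun C n => ∃ t ≤ n, (C t).b (troot d h hh) = 1) p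

/-- Fractional pebbling of `T_d^h` where white sliding moves are also permitted. -/
def FRPebblesWS (d h : ℕ) (hh : 0 < h) (p : ℝ) : Prop :=
  PebblingLE (fun C C' => FMove (IsChild d h) C C' ∨ WhiteSlide (IsChild d h) C C')
    (fun _ => True)
    (fun C n => ∃ t ≤ n, (C t).b (troot d h hh) = 1) p


/-! ### Auxiliary lemmas for the lower bound -/

section LowerBoundAux

private lemma chain_le (f : ℕ → ℝ) (a : ℕ) :
    ∀ b, a ≤ b → (∀ t, a ≤ t → t < b → f (t + 1) ≤ f t) → f b ≤ f a := by
  intro b hb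
  induction b, hb using Nat.le_induction with
  | base => intro _; exact le_rfl
  | succ b hb ih =>
      intro h
      exact le_trans (h b hb (Nat.lt_succ_self b))
        (ih fun t ht ht' => h t ht (ht'.trans (Nat.lt_succ_self b)))

private lemma chain_ge (f : ℕ → ℝ) (a : ℕ) :
    ∀ b, a ≤ b → (∀ t, a ≤ t → t < b → f t ≤ f (t + 1)) → f a ≤ f b := by
  intro b hb h
  have := chain_le (fun t => -(f t)) a b hb (fun t ht ht' => neg_le_neg (h t ht ht'))
  simpa using this

private lemma exists_inc (f : ℕ → ℝ) (a b : ℕ) (hab : a ≤ b) (h : f a < f b) :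
    ∃ t, a ≤ t ∧ t < b ∧ f t < f (t + 1) := by
  by_contra hc
  push_neg at hc
  exact absurd (chain_le f a b hab hc) (by linarith)

private lemma wmono {V : Type} (child : V → V → Prop) {C C' : FConfig V}
    (h : FMove child C C') (v : V) (hd : C'.w v < C.w v) :
    ∀ c, child c v → C.b c + C.w c = 1 := by
  rcases h with ⟨v0, _, hw, ho⟩ | ⟨v0, _, hw, ho⟩ | ⟨v0, hfull, _, hw, hch, ho⟩
  · by_cases hv : v = v0
    · subst hv; rw [hw] at hd; exact absurd hd (lt_irrefl _)
    · rw [(ho v hv).2] at hd; exact absurd hd (lt_irrefl _)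
  · by_cases hv : v = v0
    · subst hv; exact absurd hd (not_lt.2 hw)
    · rw [(ho v hv).2] at hd; exact absurd hd (lt_irrefl _)
  · by_cases hv : v = v0
    · subst hv; exact hfull
    · by_cases hc : child v v0
      · rw [(hch v hc).2] at hd; exact absurd hd (lt_irrefl _)
      · rw [(ho v hv hc).2] at hd; exact absurd hd (lt_irrefl _)

private lemma bmono {V : Type} (child : V → V → Prop) {C C' : FConfig V}
    (h : FMove child C C') (v : V) (hd : C.b v < C'.b v) :
    ∀ c, child c v → C.b c + C.w c = 1 := by
  rcases h with ⟨v0, hb, _, ho⟩ | ⟨v0, hb, _, ho⟩ | ⟨v0, hfull, _, _, hch, ho⟩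
  · by_cases hv : v = v0
    · subst hv; exact absurd hd (not_lt.2 hb)
    · rw [← (ho v hv).1] at hd; exact absurd hd (lt_irrefl _)
  · by_cases hv : v = v0
    · subst hv; rw [hb] at hd; exact absurd hd (lt_irrefl _)
    · rw [← (ho v hv).1] at hd; exact absurd hd (lt_irrefl _)
  · by_cases hv : v = v0
    · subst hv; exact hfull
    · by_cases hc : child v v0
      · exact absurd hd (not_lt.2 (hch v hc).1)
      · rw [← (ho v hv hc).1] at hd; exact absurd hd (lt_irrefl _)

private lemma weight_ge3 {V : Type} [Fintype V] [DecidableEq V] (C : FConfig V)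
    (hC : C.Valid) {a b c : V} (hab : a ≠ b) (hac : a ≠ c) (hbc : b ≠ c) :
    (C.b a + C.w a) + (C.b b + C.w b) + (C.b c + C.w c) ≤ C.weight := by
  have h : ∑ v ∈ ({a, b, c} : Finset V), (C.b v + C.w v) ≤ ∑ v, (C.b v + C.w v) :=
    Finset.sum_le_sum_of_subset_of_nonneg (Finset.subset_univ _)
      (fun v _ _ => by have := hC v; linarith [(hC v).1, (hC v).2.1])
  rw [Finset.sum_insert (by simp [hab, hac]), Finset.sum_insert (by simp [hbc]),
      Finset.sum_singleton] at h
  have hw : C.weight = ∑ v, (C.b v + C.w v) := rfl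
  linarith

private lemma weight_ge4 {V : Type} [Fintype V] [DecidableEq V] (C : FConfig V)
    (hC : C.Valid) {a b c d : V} (hab : a ≠ b) (hac : a ≠ c) (had : a ≠ d)
    (hbc : b ≠ c) (hbd : b ≠ d) (hcd : c ≠ d) :
    (C.b a + C.w a) + (C.b b + C.w b) + (C.b c + C.w c) + (C.b d + C.w d) ≤ C.weight := by
  have h : ∑ v ∈ ({a, b, c, d} : Finset V), (C.b v + C.w v) ≤ ∑ v, (C.b v + C.w v) :=
    Finset.sum_le_sum_of_subset_of_nonneg (Finset.subset_univ _)
      (fun v _ _ => by linarith [(hC v).1, (hC v).2.1])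
  rw [Finset.sum_insert (by simp [hab, hac, had]), Finset.sum_insert (by simp [hbc, hbd]),
      Finset.sum_insert (by simp [hcd]), Finset.sum_singleton] at h
  have hw : C.weight = ∑ v, (C.b v + C.w v) := rfl
  linarith

/-- Named nodes of `T_2^3`. -/
private def rt3 : TNode 2 3 := troot 2 3 (by norm_num)
private def nX : TNode 2 3 := ⟨⟨1, by omega⟩, ⟨0, by norm_num⟩⟩
private def nY : TNode 2 3 := ⟨⟨1, by omega⟩, ⟨1, by norm_num⟩⟩
private def nL0 : TNode 2 3 := ⟨⟨2, by omega⟩, ⟨0, by norm_num⟩⟩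
private def nL1 : TNode 2 3 := ⟨⟨2, by omega⟩, ⟨1, by norm_num⟩⟩
private def nL2 : TNode 2 3 := ⟨⟨2, by omega⟩, ⟨2, by norm_num⟩⟩
private def nL3 : TNode 2 3 := ⟨⟨2, by omega⟩, ⟨3, by norm_num⟩⟩

private lemma chXr : IsChild 2 3 nX rt3 := ⟨rfl, 0, rfl⟩
private lemma chYr : IsChild 2 3 nY rt3 := ⟨rfl, 1, rfl⟩
private lemma ch0X : IsChild 2 3 nL0 nX := ⟨rfl, 0, rfl⟩
private lemma ch1X : IsChild 2 3 nL1 nX := ⟨rfl, 1, rfl⟩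
private lemma ch2Y : IsChild 2 3 nL2 nY := ⟨rfl, 0, rfl⟩
private lemma ch3Y : IsChild 2 3 nL3 nY := ⟨rfl, 1, rfl⟩

private lemma case_white (p : ℝ) (n : ℕ) (C : ℕ → FConfig (TNode 2 3))
    (hval : ∀ t ≤ n, (C t).Valid)
    (hmove : ∀ t < n, FMove (IsChild 2 3) (C t) (C (t + 1)))
    (hwt : ∀ t ≤ n, (C t).weight ≤ p)
    (v c1 c2 : TNode 2 3) (h1 : IsChild 2 3 c1 v) (h2 : IsChild 2 3 c2 v)
    (d12 : c1 ≠ c2) (d1v : c1 ≠ v) (d2v : c2 ≠ v)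
    (s : ℕ) (hs : s ≤ n) (hw : 1 / 2 ≤ (C s).w v) (hend : (C n).w v = 0) :
    (5 / 2 : ℝ) ≤ p := by
  classical
  have hex : ∃ u, s ≤ u ∧ u < n ∧ (C (u + 1)).w v < (C u).w v := by
    by_contra hc
    push_neg at hc
    have h2' : (C s).w v ≤ (C n).w v := chain_ge (fun t => (C t).w v) s n hs hc
    rw [hend] at h2'
    linarith
  have hu : s ≤ Nat.find hex ∧ Nat.find hex < n ∧
      (C (Nat.find hex + 1)).w v < (C (Nat.find hex)).w v := Nat.find_spec hex
  set u := Nat.find hex with hudef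
  have hmin : ∀ t, s ≤ t → t < u → (C t).w v ≤ (C (t + 1)).w v := by
    intro t ht htu
    by_contra hlt
    push_neg at hlt
    exact Nat.find_min hex htu ⟨ht, htu.trans hu.2.1, hlt⟩
  have hwu : (1 : ℝ) / 2 ≤ (C u).w v :=
    le_trans hw (chain_ge (fun t => (C t).w v) s u hu.1 hmin)
  have hfull := wmono _ (hmove u hu.2.1) v hu.2.2
  have f1 := hfull c1 h1
  have f2 := hfull c2 h2
  have hv := (hval u hu.2.1.le) v
  have h3 := weight_ge3 (C u) (hval u hu.2.1.le) d12 d1v d2v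
  have h4 := hwt u hu.2.1.le
  linarith [hv.1]

private lemma case_black (p : ℝ) (n : ℕ) (C : ℕ → FConfig (TNode 2 3))
    (hval : ∀ t ≤ n, (C t).Valid)
    (hmove : ∀ t < n, FMove (IsChild 2 3) (C t) (C (t + 1)))
    (hwt : ∀ t ≤ n, (C t).weight ≤ p)
    (v c1 c2 o : TNode 2 3) (h1 : IsChild 2 3 c1 v) (h2 : IsChild 2 3 c2 v)
    (d12 : c1 ≠ c2) (d1o : c1 ≠ o) (d2o : c2 ≠ o)
    (s u : ℕ) (hus : u < s) (hsn : s ≤ n)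
    (hinc : (C u).b v < (C (u + 1)).b v)
    (hob : ∀ t, u ≤ t → t < s → (C (t + 1)).b o ≤ (C t).b o)
    (hbo : 1 / 2 ≤ (C s).b o) : (5 / 2 : ℝ) ≤ p := by
  have hun : u < n := lt_of_lt_of_le hus hsn
  have hfull := bmono _ (hmove u hun) v hinc
  have f1 := hfull c1 h1
  have f2 := hfull c2 h2
  have hbu : (C s).b o ≤ (C u).b o := chain_le (fun t => (C t).b o) u s hus.le hob
  have hv := (hval u hun.le) o
  have h3 := weight_ge3 (C u) (hval u hun.le) d12 d1o d2o
  have h4 := hwt u hun.le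
  linarith [hv.2.1]

end LowerBoundAux

/-- Every fractional pebbling of the complete binary tree of height 3 requires
at least 2.5 pebbles. -/
theorem frPebbles_h3_lower :
    ∀ p : ℝ, FRPebbles 2 3 (by omega) p → (5 / 2 : ℝ) ≤ p := by
  classical
  intro p hp
  obtain ⟨n, C, h0, hn, hval, -, hmove, ⟨t, htn, hroot0⟩, hwt⟩ := hp
  have hroot : (C t).b rt3 = 1 := hroot0
  have hb0 : (C 0).b rt3 = 0 := by rw [h0]; rfl
  obtain ⟨s, -, hst, hsinc0⟩ := exists_inc (fun i => (C i).b rt3) 0 t (Nat.zero_le t)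
    (by rw [hb0, hroot]; norm_num)
  have hsinc : (C s).b rt3 < (C (s + 1)).b rt3 := hsinc0
  have hsn : s < n := lt_of_lt_of_le hst htn
  have hfull := bmono _ (hmove s hsn) rt3 hsinc
  have fX : (C s).b nX + (C s).w nX = 1 := hfull nX chXr
  have fY : (C s).b nY + (C s).w nY = 1 := hfull nY chYr
  have hendX : (C n).w nX = 0 := by rw [hn]; rfl
  have hendY : (C n).w nY = 0 := by rw [hn]; rfl
  by_cases hwX : 1 / 2 ≤ (C s).w nX
  · exact case_white p n C hval hmove hwt nX nL0 nL1 ch0X ch1X (by decide) (by decide)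
      (by decide) s hsn.le hwX hendX
  by_cases hwY : 1 / 2 ≤ (C s).w nY
  · exact case_white p n C hval hmove hwt nY nL2 nL3 ch2Y ch3Y (by decide) (by decide)
      (by decide) s hsn.le hwY hendY
  push_neg at hwX hwY
  have hbX : 1 / 2 ≤ (C s).b nX := by linarith
  have hbY : 1 / 2 ≤ (C s).b nY := by linarith
  have hb0X : (C 0).b nX = 0 := by rw [h0]; rfl
  have hb0Y : (C 0).b nY = 0 := by rw [h0]; rfl
  have hexX : ∃ u, u < s ∧ (C u).b nX < (C (u + 1)).b nX := by
    obtain ⟨u, -, h1, h2⟩ := exists_inc (fun i => (C i).b nX) 0 s (Nat.zero_le s)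
      (by rw [hb0X]; linarith)
    exact ⟨u, h1, h2⟩
  have hexY : ∃ u, u < s ∧ (C u).b nY < (C (u + 1)).b nY := by
    obtain ⟨u, -, h1, h2⟩ := exists_inc (fun i => (C i).b nY) 0 s (Nat.zero_le s)
      (by rw [hb0Y]; linarith)
    exact ⟨u, h1, h2⟩
  set PX := fun u => u < s ∧ (C u).b nX < (C (u + 1)).b nX with hPXdef
  set PY := fun u => u < s ∧ (C u).b nY < (C (u + 1)).b nY with hPYdef
  obtain ⟨ux0, hux0⟩ := hexX
  obtain ⟨uy0, huy0⟩ := hexY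
  set uX := Nat.findGreatest PX s with huXdef
  set uY := Nat.findGreatest PY s with huYdef
  have hPuX : PX uX := Nat.findGreatest_spec (n := s) (m := ux0) hux0.1.le hux0
  have hPuY : PY uY := Nat.findGreatest_spec (n := s) (m := uy0) huy0.1.le huy0
  rcases lt_trichotomy uX uY with hlt | heq | hgt
  · -- uX < uY : use Y's last black placement, X's black persists
    refine case_black p n C hval hmove hwt nY nL2 nL3 nX ch2Y ch3Y (by decide) (by decide)
      (by decide) s uY hPuY.1 hsn.le hPuY.2 ?_ hbX
    intro τ hτ hτs
    by_contra hbad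
    push_neg at hbad
    exact Nat.findGreatest_is_greatest (lt_of_lt_of_le hlt hτ) hτs.le ⟨hτs, hbad⟩
  · -- same move increases both: all four leaves full
    have hun : uX < n := lt_of_lt_of_le hPuX.1 hsn.le
    have hfX := bmono _ (hmove uX hun) nX hPuX.2
    have hfY := bmono _ (hmove uX hun) nY (heq ▸ hPuY.2)
    have f0 := hfX nL0 ch0X
    have f1 := hfX nL1 ch1X
    have f2 := hfY nL2 ch2Y
    have f3 := hfY nL3 ch3Y
    have h4 := weight_ge4 (C uX) (hval uX hun.le) (a := nL0) (b := nL1) (c := nL2)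
      (d := nL3) (by decide) (by decide) (by decide) (by decide) (by decide) (by decide)
    have h5 := hwt uX hun.le
    linarith
  · -- uY < uX : use X's last black placement, Y's black persists
    refine case_black p n C hval hmove hwt nX nL0 nL1 nY ch0X ch1X (by decide) (by decide)
      (by decide) s uX hPuX.1 hsn.le hPuX.2 ?_ hbY
    intro τ hτ hτs
    by_contra hbad
    push_neg at hbad
    exact Nat.findGreatest_is_greatest (lt_of_lt_of_le hgt hτ) hτs.le ⟨hτs, hbad⟩
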